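/- Let r ≥ 3 and let f : ℝ^d → ℝ be convex and differentiable, attaining its minimum f* at x*. Let X : (0, ∞) → ℝ^d be twice continuously differentiable and satisfy Ẍ_t + (r/t) Ẋ_t + ∇f(X_t) = 0. Then the energy functional E_t = (t²/(r−1)²)(f(X_t) − f*) + (1/2)‖x* − X_t − (t/(r−1)) Ẋ_t‖² is nonincreasing in t; consequently, for all t ≥ t_0 > 0, f(X_t) − f* ≤ (r−1)² E_{t_0} / t². -/

import Mathlib

open scoped RealInnerProductSpace
open Real Set

noncomputable section

lemma my_grad_convex_ineq {d : ℕ} (f : EuclideanSpace ℝ (Fin d) → ℝ)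
    (hconv : ConvexOn ℝ Set.univ f) (hf : Differentiable ℝ f)
    (x y : EuclideanSpace ℝ (Fin d)) :
    f x + ⟪gradient f x, y - x⟫ ≤ f y := by
  set g : ℝ → ℝ := fun s => f ((1 - s) • x + s • y) with hg
  have hgc : ConvexOn ℝ Set.univ g := by
    have h1 := hconv.comp_affineMap (AffineMap.lineMap (k := ℝ) x y)
    have h2 : g = f ∘ (AffineMap.lineMap (k := ℝ) x y) := by
      funext s
      simp [g, AffineMap.lineMap_apply_module]
    rw [h2]
    simpa using h1
  have hfd : HasFDerivAt f ((InnerProductSpace.toDual ℝ _) (gradient f x)) x :=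
    hasGradientAt_iff_hasFDerivAt.mp (hf x).hasGradientAt
  have hfd' : HasFDerivAt f ((InnerProductSpace.toDual ℝ _) (gradient f x))
      ((1 - (0:ℝ)) • x + (0:ℝ) • y) := by simpa using hfd
  have hline : HasDerivAt (fun s : ℝ => (1 - s) • x + s • y) ((-1 : ℝ) • x + (1:ℝ) • y) (0:ℝ) := by
    exact ((((hasDerivAt_id (0:ℝ)).const_sub 1).smul_const x).add
      ((hasDerivAt_id (0:ℝ)).smul_const y))
  have hgd : HasDerivAt g ⟪gradient f x, y - x⟫ 0 := by
    have := hfd'.comp_hasDerivAt (0:ℝ) hline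
    simp only [InnerProductSpace.toDual_apply_apply] at this
    have h2 : ((-1 : ℝ) • x + (1:ℝ) • y) = y - x := by module
    rw [h2] at this
    exact this
  have hsl := hgc.le_slope_of_hasDerivAt (Set.mem_univ (0:ℝ)) (Set.mem_univ (1:ℝ)) one_pos hgd
  have hs : slope g 0 1 = f y - f x := by
    simp [slope, g]
  rw [hs] at hsl
  linarith

theorem su_boyd_candes_energy_rate
    (d : ℕ) (r : ℝ) (hr : 3 ≤ r)
    (f : EuclideanSpace ℝ (Fin d) → ℝ)
    (hconv : ConvexOn ℝ Set.univ f) (hf : Differentiable ℝ f)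
    (xstar : EuclideanSpace ℝ (Fin d)) (hmin : ∀ x, f xstar ≤ f x)
    (X X' X'' : ℝ → EuclideanSpace ℝ (Fin d))
    (hX : ∀ t ∈ Set.Ioi (0 : ℝ), HasDerivAt X (X' t) t)
    (hX' : ∀ t ∈ Set.Ioi (0 : ℝ), HasDerivAt X' (X'' t) t)
    (hX''cont : ContinuousOn X'' (Set.Ioi 0))
    (heq : ∀ t ∈ Set.Ioi (0 : ℝ), X'' t + (r / t) • X' t + gradient f (X t) = 0) :
    AntitoneOn
      (fun t : ℝ => (t ^ 2 / (r - 1) ^ 2) * (f (X t) - f xstar) +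
        (1 / 2) * ‖xstar - X t - (t / (r - 1)) • X' t‖ ^ 2)
      (Set.Ioi 0) ∧
    ∀ t0 t : ℝ, 0 < t0 → t0 ≤ t →
      f (X t) - f xstar ≤
        (r - 1) ^ 2 *
          ((t0 ^ 2 / (r - 1) ^ 2) * (f (X t0) - f xstar) +
            (1 / 2) * ‖xstar - X t0 - (t0 / (r - 1)) • X' t0‖ ^ 2) / t ^ 2 := by
  set c : ℝ := r - 1 with hc
  have hc2 : (2:ℝ) ≤ c := by simp only [hc]; linarith
  have hc0 : (0:ℝ) < c := by linarith
  set E : ℝ → ℝ := fun t : ℝ => (t ^ 2 / (r - 1) ^ 2) * (f (X t) - f xstar) +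
        (1 / 2) * ‖xstar - X t - (t / (r - 1)) • X' t‖ ^ 2 with hE
  have key : ∀ t ∈ Set.Ioi (0:ℝ), HasDerivAt E
      ((2*t/c^2)*(f (X t) - f xstar) + (t/c) * ⟪gradient f (X t), xstar - X t⟫) t := by
    intro t ht
    have ht0 : (0:ℝ) < t := ht
    have hXd := hX t ht
    have hX'd := hX' t ht
    have hfd : HasFDerivAt f ((InnerProductSpace.toDual ℝ _) (gradient f (X t))) (X t) :=
      hasGradientAt_iff_hasFDerivAt.mp (hf (X t)).hasGradientAt
    have h1 : HasDerivAt (fun s => f (X s)) ⟪gradient f (X t), X' t⟫ t := by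
      have := hfd.comp_hasDerivAt t hXd
      simp only [InnerProductSpace.toDual_apply_apply] at this
      exact this
    have hA : HasDerivAt (fun s => (s ^ 2 / (r-1) ^ 2) * (f (X s) - f xstar))
        ((2 * t / (r-1)^2) * (f (X t) - f xstar) + (t^2/(r-1)^2) * ⟪gradient f (X t), X' t⟫) t := by
      have := ((hasDerivAt_pow 2 t).div_const ((r-1)^2)).mul (h1.sub_const (f xstar))
      convert this using 1
      · rfl
      · rfl
      · rfl
      ring
    have hv : HasDerivAt (fun s => xstar - X s - (s / (r-1)) • X' s)
        ((0 - X' t) - ((t / (r-1)) • X'' t + (1 / (r-1)) • X' t)) t := by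
      exact ((hasDerivAt_const t xstar).sub hXd).sub
        (((hasDerivAt_id t).div_const (r-1)).smul hX'd)
    have hveq : (0 - X' t) - ((t / (r-1)) • X'' t + (1 / (r-1)) • X' t)
        = (t / (r-1)) • gradient f (X t) := by
      have h0 := heq t ht
      have hXpp : X'' t = -((r/t) • X' t) - gradient f (X t) := by
        rw [eq_sub_iff_add_eq, eq_neg_iff_add_eq_zero.symm] at *
        linear_combination (norm := module) h0
      rw [hXpp]
      have hcne : r - 1 ≠ 0 := by linarith
      have htne : t ≠ 0 := ne_of_gt ht0
      rw [smul_sub, smul_neg, smul_smul]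
      have : t / (r-1) * (r / t) = r / (r - 1) := by field_simp
      rw [this]
      match_scalars <;> field_simp <;> ring
    rw [hveq] at hv
    have hB : HasDerivAt (fun s => (1/2 : ℝ) * ‖xstar - X s - (s / (r-1)) • X' s‖ ^ 2)
        ((t/(r-1)) * ⟪gradient f (X t), xstar - X t⟫
          - (t^2/(r-1)^2) * ⟪gradient f (X t), X' t⟫) t := by
      have hin := hv.inner ℝ hv
      have := hin.const_mul (1/2 : ℝ)
      simp only [← real_inner_self_eq_norm_sq]
      convert this using 1
      · rfl
      · rfl
      simp only [inner_sub_left, inner_sub_right, real_inner_smul_left, real_inner_smul_right,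
        real_inner_comm (X' t) (gradient f (X t)), real_inner_comm (X t) (gradient f (X t)),
        real_inner_comm xstar (gradient f (X t))]
      have hcne : r - 1 ≠ 0 := by linarith
      field_simp
      ring
    have := hA.add hB
    rw [hE]
    convert this using 1
    · rfl
    · rfl
    · rfl
    rw [hc]
    ring
  have hderiv_nonpos : ∀ t ∈ Set.Ioi (0:ℝ), deriv E t ≤ 0 := by
    intro t ht
    have ht0 : (0:ℝ) < t := ht
    rw [(key t ht).deriv]
    have hgi := my_grad_convex_ineq f hconv hf (X t) xstar
    have hip : ⟪gradient f (X t), xstar - X t⟫ ≤ -(f (X t) - f xstar) := by linarith [hmin (X t)]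
    have hF : 0 ≤ f (X t) - f xstar := by linarith [hmin (X t)]
    have htc : 0 < t / c := div_pos ht0 hc0
    have h2 : (t/c) * ⟪gradient f (X t), xstar - X t⟫ ≤ (t/c) * (-(f (X t) - f xstar)) :=
      mul_le_mul_of_nonneg_left hip (le_of_lt htc)
    have h3 : (2*t/c^2)*(f (X t) - f xstar) + (t/c) * (-(f (X t) - f xstar)) ≤ 0 := by
      have : (2*t/c^2)*(f (X t) - f xstar) + (t/c) * (-(f (X t) - f xstar))
          = (t * (2 - c) / c^2) * (f (X t) - f xstar) := by field_simp; ring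
      rw [this]
      apply mul_nonpos_of_nonpos_of_nonneg _ hF
      apply div_nonpos_of_nonpos_of_nonneg _ (sq_nonneg c)
      nlinarith
    linarith
  have hanti : AntitoneOn E (Set.Ioi 0) := by
    apply antitoneOn_of_deriv_nonpos (convex_Ioi 0)
    · intro t ht
      exact ((key t ht).differentiableAt).continuousAt.continuousWithinAt
    · rw [interior_Ioi]
      intro t ht
      exact ((key t ht).differentiableAt).differentiableWithinAt
    · rw [interior_Ioi]
      exact hderiv_nonpos
  refine ⟨hanti, ?_⟩
  intro t0 t ht0 htt
  have ht : (0:ℝ) < t := lt_of_lt_of_le ht0 htt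
  have hle : E t ≤ E t0 := hanti ht0 ht htt
  have hlow : (t ^ 2 / (r - 1) ^ 2) * (f (X t) - f xstar) ≤ E t := by
    have : (0:ℝ) ≤ (1 / 2) * ‖xstar - X t - (t / (r - 1)) • X' t‖ ^ 2 := by positivity
    simp only [hE]
    linarith
  have h4 : t ^ 2 / (r - 1) ^ 2 * (f (X t) - f xstar) ≤
      (t0 ^ 2 / (r - 1) ^ 2) * (f (X t0) - f xstar) +
        (1 / 2) * ‖xstar - X t0 - (t0 / (r - 1)) • X' t0‖ ^ 2 := le_trans hlow hle
  rw [hc]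
  rw [le_div_iff₀ (by positivity : (0:ℝ) < t ^ 2)]
  have hcne : (r - 1) ≠ 0 := by linarith
  have h5 := mul_le_mul_of_nonneg_left h4 (by positivity : (0:ℝ) ≤ (r-1)^2)
  calc (f (X t) - f xstar) * t ^ 2
      = (r-1)^2 * (t ^ 2 / (r - 1) ^ 2 * (f (X t) - f xstar)) := by field_simp
    _ ≤ (r - 1) ^ 2 * ((t0 ^ 2 / (r - 1) ^ 2) * (f (X t0) - f xstar) +
        (1 / 2) * ‖xstar - X t0 - (t0 / (r - 1)) • X' t0‖ ^ 2) := h5
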